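/- Let C be a finite set of vectors in ℝ^N and let (x_n) be a sequence of points in the strictly positive orthant ℝ^N_{>0}. Then there exists a subsequence of (x_n) along which C is partitioned. -/

import Mathlib

open Filter Topology

/-- `vpow x v = ∏ i, (x i) ^ (v i)` (real exponents, with the convention `0^0 = 1`). -/
noncomputable def vpow {N : ℕ} (x v : Fin N → ℝ) : ℝ := ∏ i, x i ^ v i

/-- The finite set of vectors `C ⊆ ℝ^N` is partitioned along the sequence `x` into the
ordered tiers `T 0 ≻ T 1 ≻ ⋯ ≻ T (P-1)` with constant `M > 1`. -/
def PartitionedAlong {N P : ℕ} (C : Finset (Fin N → ℝ)) (x : ℕ → Fin N → ℝ)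
    (T : Fin P → Set (Fin N → ℝ)) (M : ℝ) : Prop :=
  1 < M ∧
  (∀ i, (T i).Nonempty) ∧
  (∀ i j, i ≠ j → Disjoint (T i) (T j)) ∧
  (⋃ i, T i) = (C : Set (Fin N → ℝ)) ∧
  (∀ i : Fin P, ∀ yj ∈ T i, ∀ yk ∈ T i, ∀ n : ℕ,
    1 / M ≤ vpow (x n) (yk - yj) ∧ vpow (x n) (yk - yj) ≤ M) ∧
  (∀ i j : Fin P, i < j → ∀ yk ∈ T i, ∀ yj ∈ T j,
    Tendsto (fun n => vpow (x n) yk / vpow (x n) yj) atTop atTop)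

lemma vpow_exp {N : ℕ} (x v : Fin N → ℝ) (hx : ∀ i, 0 < x i) :
    vpow x v = Real.exp (∑ i, v i * Real.log (x i)) := by
  rw [vpow, Real.exp_sum]
  exact Finset.prod_congr rfl fun i _ => by
    rw [Real.rpow_def_of_pos (hx i), mul_comm]

/-- Given a finite set `C` of vectors in `ℝ^N` and a sequence of points in the strictly
positive orthant, there is a subsequence along which `C` is partitioned. -/
theorem stmt_1 {N : ℕ} (C : Finset (Fin N → ℝ)) (x : ℕ → Fin N → ℝ)
    (hx : ∀ n i, 0 < x n i) :
    ∃ φ : ℕ → ℕ, StrictMono φ ∧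
      ∃ (P : ℕ) (T : Fin P → Set (Fin N → ℝ)) (M : ℝ),
        PartitionedAlong C (fun n => x (φ n)) T M := by
  classical
  set g : ℕ → (↥C × ↥C → ℝ) :=
    fun n p => ∑ i, ((p.1 : Fin N → ℝ) i - (p.2 : Fin N → ℝ) i) * Real.log (x n i) with hg
  obtain ⟨L, φ, hφ, hL⟩ :=
    SeqCompactSpace.tendsto_subseq (fun n p => ((g n p : ℝ) : EReal))
  rw [tendsto_pi_nhds] at hL
  set h : ℕ → (↥C × ↥C → ℝ) := fun n => g (φ n) with hh
  have hL' : ∀ p, Tendsto (fun n => ((h n p : ℝ) : EReal)) atTop (𝓝 (L p)) := fun p => hL p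
  -- antisymmetry
  have hanti : ∀ n (a b : ↥C), h n (b, a) = - h n (a, b) := by
    intro n a b
    simp only [hh, hg, ← Finset.sum_neg_distrib]
    exact Finset.sum_congr rfl fun i _ => by ring
  have hswap : ∀ a b : ↥C, L (b, a) = - L (a, b) := by
    intro a b
    refine tendsto_nhds_unique (hL' (b, a)) ?_
    have := (hL' (a, b)).neg
    convert this using 2 with n
    rw [hanti n a b, EReal.coe_neg]
  -- additivity
  have hadd : ∀ n (a b c : ↥C), h n (a, c) = h n (a, b) + h n (b, c) := by
    intro n a b c
    simp only [hh, hg, ← Finset.sum_add_distrib]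
    exact Finset.sum_congr rfl fun i _ => by ring
  -- limit characterizations
  have hreal : ∀ p (a : ℝ), L p = (a : EReal) → Tendsto (fun n => h n p) atTop (𝓝 a) := by
    intro p a hp
    rw [← EReal.tendsto_coe]
    exact hp ▸ hL' p
  have htop : ∀ p, L p = ⊤ → Tendsto (fun n => h n p) atTop atTop := by
    intro p hp
    rw [tendsto_atTop]
    intro b
    have := (EReal.tendsto_nhds_top_iff_real.1 (hp ▸ hL' p)) b
    filter_upwards [this] with n hn
    exact le_of_lt (by exact_mod_cast hn)
  have hofTop : ∀ p, Tendsto (fun n => h n p) atTop atTop → L p = ⊤ := by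
    intro p hp
    refine tendsto_nhds_unique (hL' p) ?_
    rw [EReal.tendsto_nhds_top_iff_real]
    intro b
    filter_upwards [hp.eventually_gt_atTop b] with n hn
    exact_mod_cast hn
  have trich : ∀ e : EReal, e = ⊥ ∨ (∃ a : ℝ, e = (a : EReal)) ∨ e = ⊤ := by
    intro e
    induction e using EReal.rec with
    | bot => exact Or.inl rfl
    | coe a => exact Or.inr (Or.inl ⟨a, rfl⟩)
    | top => exact Or.inr (Or.inr rfl)
  have hbdd : ∀ p, L p ≠ ⊥ → ∃ c : ℝ, ∀ᶠ n in atTop, c ≤ h n p := by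
    intro p hp
    rcases trich (L p) with h1 | ⟨a, h1⟩ | h1
    · exact absurd h1 hp
    · exact ⟨a - 1, (hreal p a h1).eventually (eventually_ge_nhds (by linarith))⟩
    · exact ⟨0, (htop p h1).eventually_ge_atTop 0⟩
  -- transitivity
  have ktrans : ∀ a b c : ↥C, L (a, b) = ⊤ → L (b, c) ≠ ⊥ → L (a, c) = ⊤ := by
    intro a b c h1 h2
    apply hofTop
    obtain ⟨c0, hc0⟩ := hbdd _ h2
    have : Tendsto (fun n => h n (a, b) + c0) atTop atTop :=
      tendsto_atTop_add_const_right _ _ (htop _ h1)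
    refine tendsto_atTop_mono' _ ?_ this
    filter_upwards [hc0] with n hn
    rw [hadd n a b c]
    linarith
  have hzero : ∀ a : ↥C, L (a, a) = ((0 : ℝ) : EReal) := by
    intro a
    refine tendsto_nhds_unique (hL' (a, a)) ?_
    have : ∀ n, h n (a, a) = 0 := fun n => by
      have := hanti n a a; linarith
    simp only [this]
    exact tendsto_const_nhds
  -- rank function
  set r : ↥C → ℕ := fun y => (Finset.univ.filter (fun z : ↥C => L (z, y) = ⊤)).card with hr
  have hne_bot_of_real : ∀ (e : EReal) (a : ℝ), e = (a : EReal) → e ≠ ⊥ := by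
    intro e a he; rw [he]; exact EReal.coe_ne_bot a
  have req : ∀ y z : ↥C, (∃ a : ℝ, L (y, z) = (a : EReal)) → r y = r z := by
    intro y z ⟨a, ha⟩
    have hset : (Finset.univ.filter (fun w : ↥C => L (w, y) = ⊤)) =
        (Finset.univ.filter (fun w : ↥C => L (w, z) = ⊤)) := by
      ext w
      simp only [Finset.mem_filter, Finset.mem_univ, true_and]
      constructor
      · intro hw; exact ktrans w y z hw (hne_bot_of_real _ a ha)
      · intro hw
        refine ktrans w z y hw ?_
        rw [hswap y z, ha, ← EReal.coe_neg]
        exact hne_bot_of_real _ (-a) rfl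
    simp only [hr, hset]
  have rlt : ∀ y z : ↥C, L (y, z) = ⊤ → r y < r z := by
    intro y z hyz
    apply Finset.card_lt_card
    constructor
    · intro w hw
      simp only [Finset.mem_filter, Finset.mem_univ, true_and] at hw ⊢
      exact ktrans w y z hw (by rw [hyz]; exact fun hc => top_ne_bot hc)
    · intro hsub
      have hy : y ∈ Finset.univ.filter (fun w : ↥C => L (w, z) = ⊤) := by
        simp only [Finset.mem_filter, Finset.mem_univ, true_and]; exact hyz
      have := hsub hy
      simp only [Finset.mem_filter, Finset.mem_univ, true_and, hzero y] at this
      exact EReal.coe_ne_top 0 this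
  have req' : ∀ y z : ↥C, r y = r z → ∃ a : ℝ, L (y, z) = (a : EReal) := by
    intro y z hrz
    rcases trich (L (y, z)) with h1 | h1 | h1
    · have : L (z, y) = ⊤ := by rw [hswap y z, h1]; rfl
      exact absurd hrz.symm (ne_of_lt (rlt z y this))
    · exact h1
    · exact absurd hrz (ne_of_lt (rlt y z h1))
  have rlt' : ∀ y z : ↥C, r y < r z → L (y, z) = ⊤ := by
    intro y z hrz
    rcases trich (L (y, z)) with h1 | ⟨a, h1⟩ | h1
    · have : L (z, y) = ⊤ := by rw [hswap y z, h1]; rfl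
      exact absurd (rlt z y this) (by omega)
    · exact absurd (req y z ⟨a, h1⟩) (ne_of_lt hrz)
    · exact h1
  -- uniform bound on pairs with real limit
  have hKf : ∀ p : ↥C × ↥C, ∃ Kp : ℝ, ∀ a : ℝ, L p = (a : EReal) → ∀ n, |h n p| ≤ Kp := by
    intro p
    rcases trich (L p) with h1 | ⟨a, h1⟩ | h1
    · exact ⟨0, fun a ha => absurd h1 (hne_bot_of_real _ a ha)⟩
    · have ht := hreal p a h1
      obtain ⟨b, hb⟩ := ht.bddAbove_range
      obtain ⟨b', hb'⟩ := ht.bddBelow_range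
      refine ⟨max |b| |b'|, fun a' _ n => ?_⟩
      rw [abs_le]
      constructor
      · have h2 := hb' (Set.mem_range_self n)
        have h3 := neg_abs_le b'
        have h4 := le_max_right |b| |b'|
        linarith
      · have h2 := hb (Set.mem_range_self n)
        have h3 := le_abs_self b
        have h4 := le_max_left |b| |b'|
        linarith
    · exact ⟨0, fun a ha => absurd h1 (by rw [ha]; exact EReal.coe_ne_top a)⟩
  choose Kf hKf using hKf
  set K : ℝ := ∑ p : ↥C × ↥C, |Kf p| with hK
  have hKle : ∀ p, Kf p ≤ K :=
    fun p => le_trans (le_abs_self _)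
      (Finset.single_le_sum (fun q _ => abs_nonneg (Kf q)) (Finset.mem_univ p))
  set M : ℝ := Real.exp K + 1 with hM
  have hM1 : 1 < M := by have := Real.exp_pos K; simp only [hM]; linarith
  have hMexp : Real.exp K ≤ M := by simp only [hM]; linarith
  -- vpow formulas
  have hvpow : ∀ (n : ℕ) (z1 z2 : ↥C),
      vpow (x (φ n)) ((z1 : Fin N → ℝ) - (z2 : Fin N → ℝ)) = Real.exp (h n (z1, z2)) := by
    intro n z1 z2
    rw [vpow_exp _ _ (fun i => hx (φ n) i)]
    simp only [hh, hg, Pi.sub_apply]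
  have hvq : ∀ (n : ℕ) (z1 z2 : ↥C),
      vpow (x (φ n)) (z1 : Fin N → ℝ) / vpow (x (φ n)) (z2 : Fin N → ℝ)
        = Real.exp (h n (z1, z2)) := by
    intro n z1 z2
    rw [vpow_exp _ _ (fun i => hx (φ n) i), vpow_exp _ _ (fun i => hx (φ n) i),
      ← Real.exp_sub]
    congr 1
    rw [← Finset.sum_sub_distrib]
    simp only [hh, hg]
    exact Finset.sum_congr rfl fun i _ => by ring
  -- tiers
  set I : Finset ℕ := Finset.univ.image r with hI
  set P := I.card with hP
  set e := I.orderIsoOfFin rfl with he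
  refine ⟨φ, hφ, P, fun i => {y | ∃ z : ↥C, (z : Fin N → ℝ) = y ∧ r z = (e i : ℕ)}, M, ?_⟩
  unfold PartitionedAlong
  refine ⟨hM1, ?_, ?_, ?_, ?_, ?_⟩
  · -- nonempty
    intro i
    have hmem : (e i : ℕ) ∈ Finset.image r Finset.univ := (e i).2
    rw [Finset.mem_image] at hmem
    obtain ⟨z, _, hz⟩ := hmem
    exact ⟨z, z, rfl, hz⟩
  · -- disjoint
    intro i j hij
    rw [Set.disjoint_left]
    rintro y ⟨z1, rfl, h1⟩ ⟨z2, hz2, h2⟩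
    have hz : z1 = z2 := Subtype.ext hz2.symm
    subst hz
    exact hij (e.injective (Subtype.ext (h1.symm.trans h2)))
  · -- union
    ext y
    simp only [Set.mem_iUnion, Set.mem_setOf_eq, Finset.coe_sort_coe, Finset.mem_coe]
    constructor
    · rintro ⟨i, z, rfl, _⟩
      exact z.2
    · intro hy
      have hrz : r ⟨y, hy⟩ ∈ I := by
        rw [hI]; exact Finset.mem_image_of_mem r (Finset.mem_univ _)
      obtain ⟨i, hi⟩ := e.surjective ⟨r ⟨y, hy⟩, hrz⟩
      exact ⟨i, ⟨y, hy⟩, rfl, (congrArg Subtype.val hi).symm⟩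
  · -- within-tier bounds
    intro i yj hyj yk hyk n
    obtain ⟨zj, rfl, hjr⟩ := hyj
    obtain ⟨zk, rfl, hkr⟩ := hyk
    obtain ⟨a, ha⟩ := req' zk zj (hkr.trans hjr.symm)
    have hb : |h n (zk, zj)| ≤ K := le_trans (hKf (zk, zj) a ha n) (hKle _)
    rw [abs_le] at hb
    have hgoal : vpow (x (φ n)) ((zk : Fin N → ℝ) - (zj : Fin N → ℝ))
        = Real.exp (h n (zk, zj)) := hvpow n zk zj
    constructor
    · show 1 / M ≤ vpow (x (φ n)) ((zk : Fin N → ℝ) - (zj : Fin N → ℝ))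
      rw [hgoal]
      have h1 : 1 / M ≤ 1 / Real.exp K :=
        one_div_le_one_div_of_le (Real.exp_pos K) hMexp
      have h2 : (1 : ℝ) / Real.exp K = Real.exp (-K) := by
        rw [Real.exp_neg]; exact (one_div _)
      have h3 : Real.exp (-K) ≤ Real.exp (h n (zk, zj)) :=
        Real.exp_le_exp.2 (by linarith [hb.1])
      linarith
    · show vpow (x (φ n)) ((zk : Fin N → ℝ) - (zj : Fin N → ℝ)) ≤ M
      rw [hgoal]
      exact le_trans (Real.exp_le_exp.2 hb.2) hMexp
  · -- cross-tier
    intro i j hij yk hyk yj hyj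
    obtain ⟨zk, rfl, hkr⟩ := hyk
    obtain ⟨zj, rfl, hjr⟩ := hyj
    have hlt : r zk < r zj := by
      rw [hkr, hjr]
      exact Subtype.coe_lt_coe.2 (e.strictMono hij)
    have hT : L (zk, zj) = ⊤ := rlt' zk zj hlt
    exact (Real.tendsto_exp_atTop.comp (htop _ hT)).congr fun n => (hvq n zk zj).symm
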